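/- Dynamic programming representation: under the convexity assumption, for every (γ,P) ∈ ℝ(𝒯̄×S)×ℝ(𝒯) and every (t,x) ∈ 𝒯×S, U[γ,P](t,x) = inf_{π∈Δ} E[ Σ_{s=t}^{T−1} ( ℓ(s,X_s^π,π(s,X_s^π,·)) + γ(s,X_s^π) + α(s,X_s^π,X_{s+1}^π)P(s) ) + γ(T,X_T^π) ], where (X_s^π)_{s=t,…,T} is the Markov chain on S with X_t^π = x and transition probabilities P(X_{s+1}^π = y | X_s^π = x') = π(s,x',y). -/

import Mathlib

noncomputable section
open Finset Filter Topology Bornology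
open scoped Classical Pointwise

/-- Fenchel conjugate of a function on a finite coordinate space. -/
def conjFn {d : Type*} [Fintype d] (g : (d → ℝ) → EReal) (y : d → ℝ) : EReal :=
  ⨆ x : d → ℝ, (↑(∑ i, x i * y i) : EReal) - g x

/-- Fenchel conjugate, scalar case. -/
def conjR (g : ℝ → EReal) (y : ℝ) : EReal :=
  ⨆ x : ℝ, (↑(x * y) : EReal) - g x

/-- Subdifferential (empty where `g = ⊤`). -/
def subdiffFn {d : Type*} [Fintype d] (g : (d → ℝ) → EReal) (x : d → ℝ) : Set (d → ℝ) :=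
  {p | g x ≠ ⊤ ∧ ∀ x', g x + (↑(∑ i, p i * (x' i - x i)) : EReal) ≤ g x'}

def subdiffR (g : ℝ → EReal) (x : ℝ) : Set ℝ :=
  {p | g x ≠ ⊤ ∧ ∀ x', g x + (↑(p * (x' - x)) : EReal) ≤ g x'}

def EProper {E : Type*} (g : E → EReal) : Prop := (∃ x, g x ≠ ⊤) ∧ ∀ x, g x ≠ ⊥

def EConvexOn {E : Type*} [AddCommMonoid E] [SMul ℝ E] (g : E → EReal) : Prop :=
  ∀ x y : E, ∀ a b : ℝ, 0 ≤ a → 0 ≤ b → a + b = 1 →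
    g (a • x + b • y) ≤ (a : EReal) * g x + (b : EReal) * g y

def EStrictConvexOn {E : Type*} [AddCommMonoid E] [SMul ℝ E] (g : E → EReal) : Prop :=
  ∀ x y : E, x ≠ y → g x ≠ ⊤ → g y ≠ ⊤ → ∀ a b : ℝ, 0 < a → 0 < b → a + b = 1 →
    g (a • x + b • y) < (a : EReal) * g x + (b : EReal) * g y

/-- Perspective function. -/
def persp {d : Type*} [Fintype d] (h : (d → ℝ) → EReal) (θ : ℝ) (x : d → ℝ) : EReal :=
  if 0 < θ then (θ : EReal) * h (θ⁻¹ • x)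
  else if θ = 0 ∧ x = 0 then 0 else ⊤

/-- The simplex `Δ(S)`. -/
def simplex (n : ℕ) : Set (Fin n → ℝ) :=
  {ρ | (∀ y, ρ y ∈ Set.Icc (0 : ℝ) 1) ∧ ∑ y, ρ y = 1}

abbrev Msp (T n : ℕ) := Fin (T + 1) → Fin n → ℝ
abbrev Wsp (T n : ℕ) := Fin T → Fin n → Fin n → ℝ
abbrev Psp (T : ℕ) := Fin T → ℝ
abbrev Csp (T n : ℕ) := Msp T n × Wsp T n × Msp T n × Psp T
abbrev Ksp (T n : ℕ) := Msp T n × Msp T n × Psp T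
abbrev LSp (T n : ℕ) := Fin T → Fin n → (Fin n → ℝ) → EReal
abbrev FSp (T n : ℕ) := Fin (T + 1) → (Fin n → ℝ) → EReal
abbrev PhiSp (T : ℕ) := Fin T → ℝ → EReal
abbrev ASp (T n : ℕ) := Fin T → Fin n → Fin n → ℝ

variable {T n : ℕ}

def opA (α : ASp T n) (w : Wsp T n) (t : Fin T) : ℝ := ∑ x, ∑ y, w t x y * α t x y

def opS (w : Wsp T n) (s : Fin (T + 1)) (x : Fin n) : ℝ :=
  if h : (s : ℕ) = 0 then 0
  else ∑ y, w ⟨(s : ℕ) - 1, by have := s.isLt; omega⟩ y x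

def mbar0 (m0 : Fin n → ℝ) (s : Fin (T + 1)) (x : Fin n) : ℝ := if s = 0 then m0 x else 0

def Qcpl (α : ASp T n) (m : Msp T n) (π : Wsp T n) (t : Fin T) : ℝ :=
  ∑ x, ∑ y, m t.castSucc x * π t x y * α t x y

def IsKol (m0 : Fin n → ℝ) (π : Wsp T n) (m : Msp T n) : Prop :=
  (∀ x, m 0 x = m0 x) ∧
    ∀ (t : Fin T) (x : Fin n), m t.succ x = ∑ y, m t.castSucc y * π t y x

def InDelta (π : Wsp T n) : Prop := ∀ t x, π t x ∈ simplex n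

def ConvAssumption (ℓ : LSp T n) (F : FSp T n) (φ : PhiSp T) : Prop :=
  (∀ t x, EProper (ℓ t x) ∧ EConvexOn (ℓ t x) ∧ LowerSemicontinuous (ℓ t x) ∧
    ∀ ρ, ℓ t x ρ ≠ ⊤ → ρ ∈ simplex n) ∧
  (∀ s, EProper (F s) ∧ EConvexOn (F s) ∧ LowerSemicontinuous (F s)) ∧
  (∀ t, EProper (φ t) ∧ EConvexOn (φ t) ∧ LowerSemicontinuous (φ t))

def Jpot (ℓ : LSp T n) (F : FSp T n) (φ : PhiSp T) (α : ASp T n)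
    (m : Msp T n) (π : Wsp T n) : EReal :=
  (∑ t, ∑ x, (↑(m t.castSucc x) : EReal) * ℓ t x (π t x)) +
    (∑ t, φ t (Qcpl α m π t)) + ∑ s, F s (m s)

def Jtil (ℓ : LSp T n) (F : FSp T n) (φ : PhiSp T) (α : ASp T n)
    (m : Msp T n) (w : Wsp T n) : EReal :=
  (∑ t, ∑ x, persp (ℓ t x) (m t.castSucc x) (w t x)) +
    (∑ t, φ t (opA α w t)) + ∑ s, F s (m s)

def FeasP (m0 : Fin n → ℝ) (p : Msp T n × Wsp T n) : Prop := InDelta p.2 ∧ IsKol m0 p.2 p.1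

def FeasPt (m0 : Fin n → ℝ) (p : Msp T n × Wsp T n) : Prop :=
  ∀ s x, opS p.2 s x - p.1 s x + mbar0 m0 s x = 0

def valP (ℓ : LSp T n) (F : FSp T n) (φ : PhiSp T) (α : ASp T n) (m0 : Fin n → ℝ) : EReal :=
  ⨅ p ∈ {p : Msp T n × Wsp T n | FeasP m0 p}, Jpot ℓ F φ α p.1 p.2

def valPt (ℓ : LSp T n) (F : FSp T n) (φ : PhiSp T) (α : ASp T n) (m0 : Fin n → ℝ) : EReal :=
  ⨅ p ∈ {p : Msp T n × Wsp T n | FeasPt m0 p}, Jtil ℓ F φ α p.1 p.2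

def IsSolP (ℓ : LSp T n) (F : FSp T n) (φ : PhiSp T) (α : ASp T n) (m0 : Fin n → ℝ)
    (p : Msp T n × Wsp T n) : Prop :=
  FeasP m0 p ∧ ∀ q, FeasP m0 q → Jpot ℓ F φ α p.1 p.2 ≤ Jpot ℓ F φ α q.1 q.2

def IsSolPt (ℓ : LSp T n) (F : FSp T n) (φ : PhiSp T) (α : ASp T n) (m0 : Fin n → ℝ)
    (p : Msp T n × Wsp T n) : Prop :=
  FeasPt m0 p ∧ ∀ q, FeasPt m0 q → Jtil ℓ F φ α p.1 p.2 ≤ Jtil ℓ F φ α q.1 q.2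

def dpCost (ℓ : LSp T n) (α : ASp T n) (u : Msp T n) (P : Psp T)
    (t : Fin T) (x : Fin n) : EReal :=
  conjFn (ℓ t x) (fun y => -(α t x y * P t + u t.succ y))

def FeasD (ℓ : LSp T n) (α : ASp T n) (k : Ksp T n) : Prop :=
  (∀ t x, (↑(k.1 t.castSucc x) : EReal) + dpCost ℓ α k.1 k.2.2 t x ≤ ↑(k.2.1 t.castSucc x)) ∧
  ∀ x, k.1 (Fin.last T) x = k.2.1 (Fin.last T) x

def Dobj (F : FSp T n) (φ : PhiSp T) (m0 : Fin n → ℝ) (k : Ksp T n) : EReal :=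
  (↑(∑ x, m0 x * k.1 0 x) : EReal) - (∑ t, conjR (φ t) (k.2.2 t)) -
    ∑ s, conjFn (F s) (k.2.1 s)

def valD (ℓ : LSp T n) (F : FSp T n) (φ : PhiSp T) (α : ASp T n) (m0 : Fin n → ℝ) : EReal :=
  ⨆ k ∈ {k : Ksp T n | FeasD ℓ α k}, Dobj F φ m0 k

def IsSolD (ℓ : LSp T n) (F : FSp T n) (φ : PhiSp T) (α : ASp T n) (m0 : Fin n → ℝ)
    (k : Ksp T n) : Prop :=
  FeasD ℓ α k ∧ ∀ k', FeasD ℓ α k' → Dobj F φ m0 k' ≤ Dobj F φ m0 k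

/-- `IsDP ℓ α γ P u` : `u = U[γ,P]`, i.e. `u` solves the dynamic programming equation. -/
def IsDP (ℓ : LSp T n) (α : ASp T n) (γ : Msp T n) (P : Psp T) (u : Msp T n) : Prop :=
  (∀ (t : Fin T) (x : Fin n),
    (↑(u t.castSucc x) : EReal) + dpCost ℓ α u P t x = ↑(γ t.castSucc x)) ∧
  ∀ x, u (Fin.last T) x = γ (Fin.last T) x

def valDt (ℓ : LSp T n) (F : FSp T n) (φ : PhiSp T) (α : ASp T n) (m0 : Fin n → ℝ) : EReal :=
  ⨆ k ∈ {k : Ksp T n | IsDP ℓ α k.2.1 k.2.2 k.1}, Dobj F φ m0 k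

def IsSolDt (ℓ : LSp T n) (F : FSp T n) (φ : PhiSp T) (α : ASp T n) (m0 : Fin n → ℝ)
    (γ : Msp T n) (P : Psp T) (u : Msp T n) : Prop :=
  IsDP ℓ α γ P u ∧
    ∀ γ' P' u', IsDP ℓ α γ' P' u' → Dobj F φ m0 (u', γ', P') ≤ Dobj F φ m0 (u, γ, P)

def IsKolPert (m0 : Fin n → ℝ) (ε1 : Msp T n) (π : Wsp T n) (m1 : Msp T n) : Prop :=
  (∀ x, m1 0 x = mbar0 m0 (0 : Fin (T + 1)) x + ε1 0 x) ∧
  ∀ (t : Fin T) (x : Fin n), m1 t.succ x = (∑ y, m1 t.castSucc y * π t y x) - ε1 t.succ x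

def qnorm (ε1 ε2 : Msp T n) (ε3 : Psp T) : ℝ :=
  Real.sqrt ((∑ s, ∑ x, ε1 s x ^ 2) + (∑ s, ∑ x, ε2 s x ^ 2) + ∑ t, ε3 t ^ 2)

def Qualif (ℓ : LSp T n) (F : FSp T n) (φ : PhiSp T) (α : ASp T n) (m0 : Fin n → ℝ) : Prop :=
  ∃ α0 : ℝ, 0 < α0 ∧ ∀ (ε1 ε2 : Msp T n) (ε3 : Psp T), qnorm ε1 ε2 ε3 ≤ α0 →
    ∃ π : Wsp T n, (∀ t x, ℓ t x (π t x) ≠ ⊤) ∧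
      ∃ m1 : Msp T n, IsKolPert m0 ε1 π m1 ∧ (∀ s x, 0 ≤ m1 s x) ∧
        (∀ s, F s (fun x => m1 s x + ε2 s x) ≠ ⊤) ∧
        ∀ t, φ t (Qcpl α m1 π t + ε3 t) ≠ ⊤

def Fobj (ℓ : LSp T n) (F : FSp T n) (φ : PhiSp T) (c : Csp T n) : EReal :=
  (∑ t, ∑ x, persp (ℓ t x) (c.1 t.castSucc x) (c.2.1 t x)) +
    (∑ t, φ t (c.2.2.2 t)) + ∑ s, F s (c.2.2.1 s)

def Gobj (m0 : Fin n → ℝ) (k : Ksp T n) : EReal :=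
  if (∀ s x, k.1 s x = -(mbar0 m0 s x)) ∧ k.2.1 = 0 ∧ k.2.2 = 0 then 0 else ⊤

def Aop (α : ASp T n) (c : Csp T n) : Ksp T n :=
  (fun s x => opS c.2.1 s x - c.1 s x,
   fun s x => c.1 s x - c.2.2.1 s x,
   fun t => opA α c.2.1 t - c.2.2.2 t)

def AstarOp (α : ASp T n) (k : Ksp T n) : Csp T n :=
  (fun s x => k.2.1 s x - k.1 s x,
   fun t x y => α t x y * k.2.2 t + k.1 t.succ y,
   fun s x => -k.2.1 s x,
   fun t => -k.2.2 t)

def cpair (c c' : Csp T n) : ℝ :=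
  (∑ s, ∑ x, c.1 s x * c'.1 s x) + (∑ t, ∑ x, ∑ y, c.2.1 t x y * c'.2.1 t x y) +
    (∑ s, ∑ x, c.2.2.1 s x * c'.2.2.1 s x) + ∑ t, c.2.2.2 t * c'.2.2.2 t

def kpair (k k' : Ksp T n) : ℝ :=
  (∑ s, ∑ x, k.1 s x * k'.1 s x) + (∑ s, ∑ x, k.2.1 s x * k'.2.1 s x) +
    ∑ t, k.2.2 t * k'.2.2 t

def FobjStar (ℓ : LSp T n) (F : FSp T n) (φ : PhiSp T) (c' : Csp T n) : EReal :=
  ⨆ c : Csp T n, (↑(cpair c c') : EReal) - Fobj ℓ F φ c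

def GobjStar (m0 : Fin n → ℝ) (k : Ksp T n) : EReal := ↑(-(∑ x, m0 x * k.1 0 x))

def PfrakObj (ℓ : LSp T n) (F : FSp T n) (φ : PhiSp T) (α : ASp T n) (m0 : Fin n → ℝ)
    (c : Csp T n) : EReal := Fobj ℓ F φ c + Gobj m0 (Aop α c)

def DfrakObj (ℓ : LSp T n) (F : FSp T n) (φ : PhiSp T) (α : ASp T n) (m0 : Fin n → ℝ)
    (k : Ksp T n) : EReal := FobjStar ℓ F φ (-AstarOp α k) + GobjStar m0 k

def IsSolPfrak (ℓ : LSp T n) (F : FSp T n) (φ : PhiSp T) (α : ASp T n) (m0 : Fin n → ℝ)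
    (c : Csp T n) : Prop := ∀ c', PfrakObj ℓ F φ α m0 c ≤ PfrakObj ℓ F φ α m0 c'

def IsSolDfrak (ℓ : LSp T n) (F : FSp T n) (φ : PhiSp T) (α : ASp T n) (m0 : Fin n → ℝ)
    (k : Ksp T n) : Prop := ∀ k', DfrakObj ℓ F φ α m0 k ≤ DfrakObj ℓ F φ α m0 k'

def MFGi (ℓ : LSp T n) (α : ASp T n) (γ : Msp T n) (P : Psp T) (u : Msp T n) : Prop :=
  (∀ (t : Fin T) (x : Fin n), (↑(u t.castSucc x) : EReal) =
      ⨅ ρ ∈ simplex n,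
        ℓ t x ρ + ↑(γ t.castSucc x) + ↑(∑ y, ρ y * (α t x y * P t + u t.succ y))) ∧
  ∀ x, u (Fin.last T) x = γ (Fin.last T) x

def MFGii (ℓ : LSp T n) (α : ASp T n) (π : Wsp T n) (γ : Msp T n) (P : Psp T)
    (u : Msp T n) : Prop :=
  ∀ (t : Fin T) (x : Fin n),
    ℓ t x (π t x) + ↑(γ t.castSucc x) + ↑(∑ y, π t x y * (α t x y * P t + u t.succ y)) =
      (↑(u t.castSucc x) : EReal)

def IsMFGSol (ℓ : LSp T n) (F : FSp T n) (φ : PhiSp T) (α : ASp T n) (m0 : Fin n → ℝ)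
    (m : Msp T n) (π : Wsp T n) (u : Msp T n) (γ : Msp T n) (P : Psp T) : Prop :=
  InDelta π ∧ MFGi ℓ α γ P u ∧ MFGii ℓ α π γ P u ∧ IsKol m0 π m ∧
    (∀ s, γ s ∈ subdiffFn (F s) (m s)) ∧ ∀ t, P t ∈ subdiffR (φ t) (Qcpl α m π t)


/-- Probability of a path of the controlled Markov chain started at time `t`
(only transitions at times `s ≥ t` count). -/
def pathW {T n : ℕ} (π : Wsp T n) (t : Fin T) (p : Fin (T + 1) → Fin n) : ℝ :=
  ∏ s ∈ univ.filter (fun s : Fin T => t ≤ s), π s (p s.castSucc) (p s.succ)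

/-- Cost along a path: running costs from time `t` to `T-1` plus final cost. -/
def pathC {T n : ℕ} (ℓ : LSp T n) (α : ASp T n) (γ : Msp T n) (P : Psp T)
    (π : Wsp T n) (t : Fin T) (p : Fin (T + 1) → Fin n) : EReal :=
  (∑ s ∈ univ.filter (fun s : Fin T => t ≤ s),
      (ℓ s (p s.castSucc) (π s (p s.castSucc)) + ↑(γ s.castSucc (p s.castSucc)) +
        ↑(α s (p s.castSucc) (p s.succ) * P s))) +
    ↑(γ (Fin.last T) (p (Fin.last T)))

/-- Expected cost of the controlled Markov chain started from `x` at time `t`: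
finite sum over all paths pinned at `x` up to time `t`, weighted by the
products of the transition probabilities. -/
def expCost {T n : ℕ} (ℓ : LSp T n) (α : ASp T n) (γ : Msp T n) (P : Psp T)
    (π : Wsp T n) (t : Fin T) (x : Fin n) : EReal :=
  ∑ p ∈ univ.filter
      (fun p : Fin (T + 1) → Fin n => ∀ s : Fin (T + 1), s ≤ t.castSucc → p s = x),
    (↑(pathW π t p) : EReal) * pathC ℓ α γ P π t p

/-! ### Auxiliary material for the dynamic programming representation -/

section DPRaux

theorem DPR_mul_add {r : ℝ} (hr : 0 ≤ r) (A B : EReal) :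
    (r : EReal) * (A + B) = r * A + r * B := by
  rcases hr.eq_or_lt with h | h
  · simp [← h]
  have hr' : (0:EReal) < r := by exact_mod_cast h
  induction A <;> induction B <;>
    simp_all [EReal.mul_bot_of_pos hr', EReal.mul_top_of_pos hr', ← EReal.coe_mul,
      EReal.bot_add, EReal.add_bot, EReal.top_add_of_ne_bot, EReal.add_top_of_ne_bot,
      mul_add, ← EReal.coe_add]

theorem DPR_sum_coe_mul {ι : Type*} (s : Finset ι) (w : ι → ℝ) (hw : ∀ i ∈ s, 0 ≤ w i)
    (C : EReal) : (∑ i ∈ s, (w i : EReal) * C) = ((∑ i ∈ s, w i : ℝ) : EReal) * C := by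
  induction s using Finset.induction with
  | empty => simp
  | insert a s hni ih =>
    rw [Finset.sum_insert hni, Finset.sum_insert hni,
      ih (fun i hi => hw i (mem_insert_of_mem hi)),
      EReal.coe_add, EReal.right_distrib_of_nonneg
        (by exact_mod_cast hw a (mem_insert_self a s))
        (by exact_mod_cast Finset.sum_nonneg fun i hi => hw i (mem_insert_of_mem hi))]

theorem DPR_mul_sum {r : ℝ} (hr : 0 ≤ r) {ι : Type*} (s : Finset ι) (f : ι → EReal) :
    (r : EReal) * ∑ i ∈ s, f i = ∑ i ∈ s, (r : EReal) * f i := by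
  induction s using Finset.induction with
  | empty => simp
  | insert a s hni ih =>
    rw [Finset.sum_insert hni, Finset.sum_insert hni, DPR_mul_add hr, ih]

theorem DPR_mul_le_mul {r : ℝ} (hr : 0 ≤ r) {A B : EReal} (h : A ≤ B) :
    (r : EReal) * A ≤ r * B :=
  mul_le_mul_of_nonneg_left h (by exact_mod_cast hr)

theorem DPR_mul_ne_bot {r : ℝ} (hr : 0 ≤ r) {A : EReal} (hA : A ≠ ⊥) :
    (r : EReal) * A ≠ ⊥ := by
  rcases hr.eq_or_lt with h | h
  · simp [← h]
  have hr' : (0:EReal) < r := by exact_mod_cast h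
  induction A <;>
    simp_all [EReal.mul_top_of_pos hr', ← EReal.coe_mul]

theorem DPR_coe_sum {ι : Type*} (s : Finset ι) (f : ι → ℝ) :
    ((∑ i ∈ s, f i : ℝ) : EReal) = ∑ i ∈ s, (f i : EReal) := by
  induction s using Finset.induction with
  | empty => simp
  | insert a s hni ih => rw [Finset.sum_insert hni, Finset.sum_insert hni,
      EReal.coe_add, ih]

theorem DPR_sum_ne_bot {ι : Type*} (s : Finset ι) (f : ι → EReal)
    (hf : ∀ i ∈ s, f i ≠ ⊥) : ∑ i ∈ s, f i ≠ ⊥ := by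
  induction s using Finset.induction with
  | empty => simp
  | insert a s hni ih =>
    rw [Finset.sum_insert hni]
    simp only [ne_eq, EReal.add_eq_bot_iff, not_or]
    exact ⟨hf a (mem_insert_self a s), ih fun i hi => hf i (mem_insert_of_mem hi)⟩

variable {T n : ℕ}

/-- Paths pinned to `x` up to time `s`. -/
def DPR_Pset (T n : ℕ) (s : Fin (T + 1)) (x : Fin n) : Finset (Fin (T + 1) → Fin n) :=
  univ.filter fun p => ∀ r ≤ s, p r = x

def DPR_W (π : Wsp T n) (s : Fin (T + 1)) (p : Fin (T + 1) → Fin n) : ℝ :=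
  ∏ r ∈ univ.filter (fun r : Fin T => s ≤ r.castSucc), π r (p r.castSucc) (p r.succ)

def DPR_C (ℓ : LSp T n) (α : ASp T n) (γ : Msp T n) (P : Psp T) (π : Wsp T n)
    (s : Fin (T + 1)) (p : Fin (T + 1) → Fin n) : EReal :=
  (∑ r ∈ univ.filter (fun r : Fin T => s ≤ r.castSucc),
      (ℓ r (p r.castSucc) (π r (p r.castSucc)) + ↑(γ r.castSucc (p r.castSucc)) +
        ↑(α r (p r.castSucc) (p r.succ) * P r))) +
    ↑(γ (Fin.last T) (p (Fin.last T)))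

def DPR_E (ℓ : LSp T n) (α : ASp T n) (γ : Msp T n) (P : Psp T) (π : Wsp T n)
    (s : Fin (T + 1)) (x : Fin n) : EReal :=
  ∑ p ∈ DPR_Pset T n s x, (↑(DPR_W π s p) : EReal) * DPR_C ℓ α γ P π s p

theorem DPR_E_eq_expCost (ℓ : LSp T n) (α : ASp T n) (γ : Msp T n) (P : Psp T)
    (π : Wsp T n) (t : Fin T) (x : Fin n) :
    expCost ℓ α γ P π t x = DPR_E ℓ α γ P π t.castSucc x := by
  simp only [expCost, DPR_E, pathW, DPR_W, pathC, DPR_C, DPR_Pset,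
    Fin.castSucc_le_castSucc_iff]

theorem DPR_filter_last : univ.filter (fun r : Fin T => (Fin.last T) ≤ r.castSucc) = ∅ := by
  ext r
  simp only [mem_filter, mem_univ, true_and, Finset.notMem_empty, iff_false, Fin.le_def,
    Fin.val_last, Fin.coe_castSucc]
  have := r.isLt
  omega

theorem DPR_Pset_last (x : Fin n) : DPR_Pset T n (Fin.last T) x = {fun _ => x} := by
  ext p
  simp only [DPR_Pset, mem_filter, mem_univ, true_and, Finset.mem_singleton]
  constructor
  · intro h; funext r; exact h r (Fin.le_last r)
  · intro h r _; rw [h]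

theorem DPR_E_last (ℓ : LSp T n) (α : ASp T n) (γ : Msp T n) (P : Psp T) (π : Wsp T n)
    (x : Fin n) : DPR_E ℓ α γ P π (Fin.last T) x = ↑(γ (Fin.last T) x) := by
  unfold DPR_E DPR_W DPR_C
  rw [DPR_Pset_last, Finset.sum_singleton, DPR_filter_last]
  simp

theorem DPR_filter_castSucc (t : Fin T) :
    univ.filter (fun r : Fin T => t.castSucc ≤ r.castSucc) =
      insert t (univ.filter fun r : Fin T => t.succ ≤ r.castSucc) := by
  ext r
  simp only [mem_filter, mem_univ, true_and, Finset.mem_insert, Fin.le_def,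
    Fin.coe_castSucc, Fin.val_succ, Fin.ext_iff]
  omega

theorem DPR_not_mem_filter (t : Fin T) :
    t ∉ univ.filter (fun r : Fin T => t.succ ≤ r.castSucc) := by
  simp only [mem_filter, mem_univ, true_and, Fin.le_def, Fin.coe_castSucc, Fin.val_succ]
  omega

/-- Replace the head of a path by `x` up to time `t`. -/
def DPR_res (x : Fin n) (t : Fin T) (p : Fin (T + 1) → Fin n) : Fin (T + 1) → Fin n :=
  fun s => if s ≤ t.castSucc then x else p s

theorem DPR_res_high (x : Fin n) (t : Fin T) (p : Fin (T + 1) → Fin n) {s : Fin (T + 1)}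
    (h : (t : ℕ) < (s : ℕ)) : DPR_res x t p s = p s := by
  rw [DPR_res, if_neg]
  simp only [Fin.le_def, Fin.coe_castSucc]
  omega

theorem DPR_res_low (x : Fin n) (t : Fin T) (p : Fin (T + 1) → Fin n) {s : Fin (T + 1)}
    (h : s ≤ t.castSucc) : DPR_res x t p s = x := if_pos h

theorem DPR_sum_Pset {M : Type*} [AddCommMonoid M] (t : Fin T) (x : Fin n)
    (f : (Fin (T + 1) → Fin n) → M) :
    ∑ p ∈ DPR_Pset T n t.castSucc x, f p =
      ∑ y, ∑ p ∈ DPR_Pset T n t.succ y, f (DPR_res x t p) := by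
  rw [← Finset.sum_fiberwise_of_maps_to (g := fun p => p t.succ)
    (fun p _ => mem_univ _) f]
  refine Finset.sum_congr rfl fun y _ => ?_
  refine Finset.sum_nbij' (fun p => DPR_res y t p) (fun p => DPR_res x t p)
    ?_ ?_ ?_ ?_ ?_
  · intro p hp
    simp only [DPR_Pset, mem_filter, mem_univ, true_and] at hp ⊢
    intro r hr
    by_cases h : r ≤ t.castSucc
    · exact DPR_res_low y t p h
    · have h2 : (t : ℕ) < (r : ℕ) := by
        simpa only [Fin.le_def, Fin.coe_castSucc, not_le] using h
      have h1 : (r : ℕ) ≤ (t : ℕ) + 1 := by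
        simpa only [Fin.le_def, Fin.val_succ] using hr
      have hr' : r = t.succ := Fin.ext (by simp only [Fin.val_succ]; omega)
      rw [DPR_res_high y t p h2, hr']
      exact hp.2
  · intro p hp
    simp only [DPR_Pset, mem_filter, mem_univ, true_and] at hp ⊢
    constructor
    · intro r hr
      exact DPR_res_low x t p hr
    · rw [DPR_res_high x t p (by simp [Fin.val_succ])]
      exact hp t.succ le_rfl
  · intro p hp
    simp only [DPR_Pset, mem_filter, mem_univ, true_and] at hp
    funext s
    show DPR_res x t (DPR_res y t p) s = p s
    by_cases h : s ≤ t.castSucc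
    · rw [DPR_res_low x t _ h, hp.1 s h]
    · have h2 : (t : ℕ) < (s : ℕ) := by
        simpa only [Fin.le_def, Fin.coe_castSucc, not_le] using h
      rw [DPR_res_high x t _ h2, DPR_res_high y t p h2]
  · intro p hp
    simp only [DPR_Pset, mem_filter, mem_univ, true_and] at hp
    funext s
    show DPR_res y t (DPR_res x t p) s = p s
    by_cases h : s ≤ t.castSucc
    · have hs : s ≤ t.succ := le_trans h (by simp [Fin.le_def])
      rw [DPR_res_low y t _ h, hp s hs]
    · have h2 : (t : ℕ) < (s : ℕ) := by
        simpa only [Fin.le_def, Fin.coe_castSucc, not_le] using h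
      rw [DPR_res_high y t _ h2, DPR_res_high x t p h2]
  · intro p hp
    simp only [DPR_Pset, mem_filter, mem_univ, true_and] at hp
    congr 1
    funext s
    show p s = DPR_res x t (DPR_res y t p) s
    by_cases h : s ≤ t.castSucc
    · rw [DPR_res_low x t _ h, hp.1 s h]
    · have h2 : (t : ℕ) < (s : ℕ) := by
        simpa only [Fin.le_def, Fin.coe_castSucc, not_le] using h
      rw [DPR_res_high x t _ h2, DPR_res_high y t p h2]

theorem DPR_W_res (π : Wsp T n) (t : Fin T) (x y : Fin n) (p : Fin (T + 1) → Fin n)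
    (hp : p ∈ DPR_Pset T n t.succ y) :
    DPR_W π t.castSucc (DPR_res x t p) = π t x y * DPR_W π t.succ p := by
  simp only [DPR_Pset, mem_filter, mem_univ, true_and] at hp
  unfold DPR_W
  rw [DPR_filter_castSucc, Finset.prod_insert (DPR_not_mem_filter t)]
  congr 1
  · rw [DPR_res_low x t p (le_refl t.castSucc),
      DPR_res_high x t p (by simp [Fin.val_succ]), hp t.succ le_rfl]
  · refine Finset.prod_congr rfl fun r hr => ?_
    simp only [mem_filter, mem_univ, true_and, Fin.le_def, Fin.val_succ,
      Fin.coe_castSucc] at hr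
    rw [DPR_res_high x t p (by simpa using by omega : (t:ℕ) < (r.castSucc : ℕ)),
      DPR_res_high x t p (by simp only [Fin.val_succ]; omega)]

theorem DPR_C_res (ℓ : LSp T n) (α : ASp T n) (γ : Msp T n) (P : Psp T) (π : Wsp T n)
    (t : Fin T) (x y : Fin n) (p : Fin (T + 1) → Fin n)
    (hp : p ∈ DPR_Pset T n t.succ y) :
    DPR_C ℓ α γ P π t.castSucc (DPR_res x t p) =
      (ℓ t x (π t x) + ↑(γ t.castSucc x) + ↑(α t x y * P t)) +
        DPR_C ℓ α γ P π t.succ p := by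
  simp only [DPR_Pset, mem_filter, mem_univ, true_and] at hp
  unfold DPR_C
  rw [DPR_filter_castSucc, Finset.sum_insert (DPR_not_mem_filter t), add_assoc]
  congr 1
  · rw [DPR_res_low x t p (le_refl t.castSucc),
      DPR_res_high x t p (by simp [Fin.val_succ]), hp t.succ le_rfl]
  · congr 1
    · refine Finset.sum_congr rfl fun r hr => ?_
      simp only [mem_filter, mem_univ, true_and, Fin.le_def, Fin.val_succ,
        Fin.coe_castSucc] at hr
      rw [DPR_res_high x t p (by simpa using by omega : (t:ℕ) < (r.castSucc : ℕ)),
        DPR_res_high x t p (by simp only [Fin.val_succ]; omega)]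
    · rw [DPR_res_high x t p (by simp only [Fin.val_last]; exact t.isLt)]

theorem DPR_W_nonneg {π : Wsp T n} (hπ : InDelta π) (s : Fin (T + 1))
    (p : Fin (T + 1) → Fin n) : 0 ≤ DPR_W π s p :=
  Finset.prod_nonneg fun r _ => ((hπ r (p r.castSucc)).1 (p r.succ)).1

theorem DPR_sum_W {π : Wsp T n} (hπ : InDelta π) :
    ∀ (s : Fin (T + 1)) (x : Fin n), ∑ p ∈ DPR_Pset T n s x, DPR_W π s p = 1 := by
  intro s
  induction s using Fin.reverseInduction with
  | last =>
    intro x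
    unfold DPR_W
    rw [DPR_Pset_last, Finset.sum_singleton, DPR_filter_last, Finset.prod_empty]
  | cast t ih =>
    intro x
    rw [DPR_sum_Pset t x (DPR_W π t.castSucc)]
    have : ∀ y, ∑ p ∈ DPR_Pset T n t.succ y, DPR_W π t.castSucc (DPR_res x t p)
        = π t x y := by
      intro y
      rw [Finset.sum_congr rfl fun p hp => DPR_W_res π t x y p hp, ← Finset.mul_sum,
        ih y, mul_one]
    rw [Finset.sum_congr rfl fun y _ => this y]
    exact (hπ t x).2

theorem DPR_inner (ℓ : LSp T n) (α : ASp T n) (γ : Msp T n) (P : Psp T) {π : Wsp T n}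
    (hπ : InDelta π) (t : Fin T) (x y : Fin n) :
    ∑ p ∈ DPR_Pset T n t.succ y,
        (↑(DPR_W π t.castSucc (DPR_res x t p)) : EReal) *
          DPR_C ℓ α γ P π t.castSucc (DPR_res x t p) =
      (↑(π t x y) : EReal) *
        ((ℓ t x (π t x) + ↑(γ t.castSucc x) + ↑(α t x y * P t)) +
          DPR_E ℓ α γ P π t.succ y) := by
  have h0 : 0 ≤ π t x y := ((hπ t x).1 y).1
  set K : EReal := ℓ t x (π t x) + ↑(γ t.castSucc x) + ↑(α t x y * P t) with hK
  calc ∑ p ∈ DPR_Pset T n t.succ y,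
        (↑(DPR_W π t.castSucc (DPR_res x t p)) : EReal) *
          DPR_C ℓ α γ P π t.castSucc (DPR_res x t p)
      = ∑ p ∈ DPR_Pset T n t.succ y,
          (↑(π t x y) : EReal) * ((↑(DPR_W π t.succ p) : EReal) *
            (K + DPR_C ℓ α γ P π t.succ p)) := by
        refine Finset.sum_congr rfl fun p hp => ?_
        rw [DPR_W_res π t x y p hp, DPR_C_res ℓ α γ P π t x y p hp, EReal.coe_mul,
          mul_assoc]
    _ = (↑(π t x y) : EReal) * ∑ p ∈ DPR_Pset T n t.succ y,
          (↑(DPR_W π t.succ p) : EReal) * (K + DPR_C ℓ α γ P π t.succ p) :=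
        (DPR_mul_sum h0 _ _).symm
    _ = (↑(π t x y) : EReal) * (K + DPR_E ℓ α γ P π t.succ y) := by
        congr 1
        rw [Finset.sum_congr rfl fun p _ =>
            DPR_mul_add (DPR_W_nonneg hπ t.succ p) K (DPR_C ℓ α γ P π t.succ p),
          Finset.sum_add_distrib,
          DPR_sum_coe_mul _ _ (fun p _ => DPR_W_nonneg hπ t.succ p) K,
          DPR_sum_W hπ t.succ y]
        rw [EReal.coe_one, one_mul]
        rfl

theorem DPR_E_rec (ℓ : LSp T n) (α : ASp T n) (γ : Msp T n) (P : Psp T) {π : Wsp T n}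
    (hπ : InDelta π) (t : Fin T) (x : Fin n) :
    DPR_E ℓ α γ P π t.castSucc x =
      (ℓ t x (π t x) + ↑(γ t.castSucc x)) +
        ∑ y, (↑(π t x y) : EReal) *
          (↑(α t x y * P t) + DPR_E ℓ α γ P π t.succ y) := by
  set L : EReal := ℓ t x (π t x) + ↑(γ t.castSucc x) with hL
  have hrow : ∀ y, 0 ≤ π t x y := fun y => ((hπ t x).1 y).1
  calc DPR_E ℓ α γ P π t.castSucc x
      = ∑ y, ∑ p ∈ DPR_Pset T n t.succ y,
          (↑(DPR_W π t.castSucc (DPR_res x t p)) : EReal) *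
            DPR_C ℓ α γ P π t.castSucc (DPR_res x t p) := by
        unfold DPR_E
        exact DPR_sum_Pset t x _
    _ = ∑ y, (↑(π t x y) : EReal) *
          ((L + ↑(α t x y * P t)) + DPR_E ℓ α γ P π t.succ y) :=
        Finset.sum_congr rfl fun y _ => DPR_inner ℓ α γ P hπ t x y
    _ = ∑ y, ((↑(π t x y) : EReal) * L + (↑(π t x y) : EReal) *
          (↑(α t x y * P t) + DPR_E ℓ α γ P π t.succ y)) := by
        refine Finset.sum_congr rfl fun y _ => ?_
        rw [add_assoc, DPR_mul_add (hrow y)]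
    _ = L + ∑ y, (↑(π t x y) : EReal) *
          (↑(α t x y * P t) + DPR_E ℓ α γ P π t.succ y) := by
        rw [Finset.sum_add_distrib, DPR_sum_coe_mul _ _ (fun y _ => hrow y) L,
          (hπ t x).2, EReal.coe_one, one_mul]

theorem DPR_E_congr (ℓ : LSp T n) (α : ASp T n) (γ : Msp T n) (P : Psp T)
    {π π' : Wsp T n} (s : Fin (T + 1)) (x : Fin n)
    (h : ∀ r : Fin T, s ≤ r.castSucc → π r = π' r) :
    DPR_E ℓ α γ P π s x = DPR_E ℓ α γ P π' s x := by
  unfold DPR_E DPR_W DPR_C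
  refine Finset.sum_congr rfl fun p _ => ?_
  congr 1
  · norm_cast
    refine Finset.prod_congr rfl fun r hr => ?_
    rw [h r (mem_filter.1 hr).2]
  · congr 1
    refine Finset.sum_congr rfl fun r hr => ?_
    rw [h r (mem_filter.1 hr).2]

end DPRaux

section DPRmain

variable {T n : ℕ}

theorem DPR_exists_real {a : EReal} (h1 : a ≠ ⊤) (h2 : a ≠ ⊥) : ∃ r : ℝ, a = ↑r := by
  lift a to ℝ using ⟨h1, h2⟩ with r
  exact ⟨r, rfl⟩

theorem DPR_dp_real (ℓ : LSp T n) (α : ASp T n) (γ : Msp T n) (P : Psp T) (u : Msp T n)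
    (hdp : IsDP ℓ α γ P u) (t : Fin T) (x : Fin n) :
    dpCost ℓ α u P t x = ↑(γ t.castSucc x - u t.castSucc x) := by
  have e := hdp.1 t x
  have hd1 : dpCost ℓ α u P t x ≠ ⊤ := by
    intro h
    rw [h, EReal.coe_add_top] at e
    exact EReal.coe_ne_top _ e.symm
  have hd2 : dpCost ℓ α u P t x ≠ ⊥ := by
    intro h
    rw [h, EReal.add_bot] at e
    exact EReal.coe_ne_bot _ e.symm
  obtain ⟨d, hd⟩ := DPR_exists_real hd1 hd2
  rw [hd] at e ⊢
  have e' : u t.castSucc x + d = γ t.castSucc x := by exact_mod_cast e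
  exact_mod_cast (by linarith : d = γ t.castSucc x - u t.castSucc x)

theorem DPR_lb_ineq (ℓ : LSp T n) (α : ASp T n) (γ : Msp T n) (P : Psp T) (u : Msp T n)
    (hconv : ∀ t x, EProper (ℓ t x) ∧ EConvexOn (ℓ t x) ∧
      LowerSemicontinuous (ℓ t x) ∧ ∀ ρ, ℓ t x ρ ≠ ⊤ → ρ ∈ simplex n)
    (hdp : IsDP ℓ α γ P u) (t : Fin T) (x : Fin n) (ρ : Fin n → ℝ) :
    (↑(u t.castSucc x) : EReal) ≤ ℓ t x ρ + ↑(γ t.castSucc x) +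
      ↑(∑ y, ρ y * (α t x y * P t + u t.succ y)) := by
  by_cases htop : ℓ t x ρ = ⊤
  · rw [htop, EReal.top_add_of_ne_bot (EReal.coe_ne_bot _),
      EReal.top_add_of_ne_bot (EReal.coe_ne_bot _)]
    exact le_top
  · obtain ⟨L, hLa⟩ := DPR_exists_real htop ((hconv t x).1.2 ρ)
    have hle : (↑(∑ i, ρ i * (-(α t x i * P t + u t.succ i))) : EReal) - ℓ t x ρ ≤
        dpCost ℓ α u P t x := by
      simp only [dpCost, conjFn]
      exact le_iSup (fun ρ' : Fin n → ℝ =>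
        (↑(∑ i, ρ' i * (-(α t x i * P t + u t.succ i))) : EReal) - ℓ t x ρ') ρ
    rw [DPR_dp_real ℓ α γ P u hdp t x, hLa, ← EReal.coe_sub, EReal.coe_le_coe_iff] at hle
    have hsum : ∑ i, ρ i * (-(α t x i * P t + u t.succ i)) =
        -∑ y, ρ y * (α t x y * P t + u t.succ y) := by
      rw [← Finset.sum_neg_distrib]
      exact Finset.sum_congr rfl fun y _ => by ring
    rw [hLa, ← EReal.coe_add, ← EReal.coe_add, EReal.coe_le_coe_iff]
    rw [hsum] at hle
    linarith

theorem DPR_ub_choice (ℓ : LSp T n) (α : ASp T n) (γ : Msp T n) (P : Psp T) (u : Msp T n)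
    (hconv : ∀ t x, EProper (ℓ t x) ∧ EConvexOn (ℓ t x) ∧
      LowerSemicontinuous (ℓ t x) ∧ ∀ ρ, ℓ t x ρ ≠ ⊤ → ρ ∈ simplex n)
    (hdp : IsDP ℓ α γ P u) (t : Fin T) (x : Fin n) {ε : ℝ} (hε : 0 < ε) :
    ∃ ρ, ρ ∈ simplex n ∧ ∃ L : ℝ, ℓ t x ρ = ↑L ∧
      γ t.castSucc x + L + ∑ y, ρ y * (α t x y * P t + u t.succ y) ≤
        u t.castSucc x + ε := by
  have hkey := DPR_dp_real ℓ α γ P u hdp t x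
  have hlt : (↑(γ t.castSucc x - u t.castSucc x - ε) : EReal) < dpCost ℓ α u P t x := by
    rw [hkey]
    exact_mod_cast (by linarith : γ t.castSucc x - u t.castSucc x - ε <
      γ t.castSucc x - u t.castSucc x)
  simp only [dpCost, conjFn, lt_iSup_iff] at hlt
  obtain ⟨ρ, hρ⟩ := hlt
  have htop : ℓ t x ρ ≠ ⊤ := by
    intro h
    rw [h, sub_eq_add_neg _ (⊤ : EReal), EReal.neg_top, EReal.add_bot] at hρ
    exact not_lt_bot hρ
  obtain ⟨L, hLa⟩ := DPR_exists_real htop ((hconv t x).1.2 ρ)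
  rw [hLa, ← EReal.coe_sub, EReal.coe_lt_coe_iff] at hρ
  have hsum : ∑ i, ρ i * (-(α t x i * P t + u t.succ i)) =
      -∑ y, ρ y * (α t x y * P t + u t.succ y) := by
    rw [← Finset.sum_neg_distrib]
    exact Finset.sum_congr rfl fun y _ => by ring
  rw [hsum] at hρ
  exact ⟨ρ, (hconv t x).2.2.2 ρ htop, L, hLa, by linarith⟩

theorem DPR_lower (ℓ : LSp T n) (α : ASp T n) (γ : Msp T n) (P : Psp T) (u : Msp T n)
    (hconv : ∀ t x, EProper (ℓ t x) ∧ EConvexOn (ℓ t x) ∧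
      LowerSemicontinuous (ℓ t x) ∧ ∀ ρ, ℓ t x ρ ≠ ⊤ → ρ ∈ simplex n)
    (hdp : IsDP ℓ α γ P u) :
    ∀ (s : Fin (T + 1)) (π : Wsp T n), InDelta π → ∀ x,
      (↑(u s x) : EReal) ≤ DPR_E ℓ α γ P π s x := by
  intro s
  induction s using Fin.reverseInduction with
  | last =>
    intro π hπ x
    rw [DPR_E_last, hdp.2 x]
  | cast t ih =>
    intro π hπ x
    rw [DPR_E_rec ℓ α γ P hπ t x]
    have h2 : (↑(∑ y, π t x y * (α t x y * P t + u t.succ y)) : EReal) ≤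
        ∑ y, (↑(π t x y) : EReal) *
          (↑(α t x y * P t) + DPR_E ℓ α γ P π t.succ y) := by
      rw [DPR_coe_sum]
      refine Finset.sum_le_sum fun y _ => ?_
      rw [EReal.coe_mul]
      refine DPR_mul_le_mul ((hπ t x).1 y).1 ?_
      rw [EReal.coe_add]
      exact add_le_add_right (ih π hπ y) _
    exact le_trans (DPR_lb_ineq ℓ α γ P u hconv hdp t x (π t x))
      (add_le_add_right h2 _)

theorem DPR_upper (hn : 1 ≤ n) (ℓ : LSp T n) (α : ASp T n) (γ : Msp T n) (P : Psp T)
    (u : Msp T n)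
    (hconv : ∀ t x, EProper (ℓ t x) ∧ EConvexOn (ℓ t x) ∧
      LowerSemicontinuous (ℓ t x) ∧ ∀ ρ, ℓ t x ρ ≠ ⊤ → ρ ∈ simplex n)
    (hdp : IsDP ℓ α γ P u) :
    ∀ (s : Fin (T + 1)) (ε : ℝ), 0 < ε → ∃ π : Wsp T n, InDelta π ∧
      ∀ x, DPR_E ℓ α γ P π s x ≤ ↑(u s x + ((T - (s : ℕ) : ℕ) : ℝ) * ε) := by
  have hn0 : (0 : ℝ) < n := by exact_mod_cast Nat.lt_of_lt_of_le Nat.zero_lt_one hn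
  intro s
  induction s using Fin.reverseInduction with
  | last =>
    intro ε hε
    refine ⟨fun _ _ _ => (n : ℝ)⁻¹, ?_, ?_⟩
    · intro t x
      refine ⟨fun y => ⟨by positivity, ?_⟩, ?_⟩
      · rw [← one_div, div_le_one hn0]
        exact_mod_cast hn
      · rw [Finset.sum_const, Finset.card_univ, Fintype.card_fin, nsmul_eq_mul,
          mul_inv_cancel₀ (ne_of_gt hn0)]
    · intro x
      rw [DPR_E_last, hdp.2 x]
      simp [Fin.val_last]
  | cast t ih =>
    intro ε hε
    obtain ⟨π0, hπ0, hb0⟩ := ih ε hε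
    choose ρ hρs L hL hLe using fun x => DPR_ub_choice ℓ α γ P u hconv hdp t x hε
    classical
    set π : Wsp T n := fun r => if r = t then ρ else π0 r with hπdef
    have hπt : π t = ρ := by simp [hπdef]
    have hπ : InDelta π := by
      intro r x
      by_cases h : r = t
      · subst h
        rw [hπt]
        exact hρs x
      · simp only [hπdef, if_neg h]
        exact hπ0 r x
    refine ⟨π, hπ, ?_⟩
    intro x
    rw [DPR_E_rec ℓ α γ P hπ t x, hπt, hL x]
    set k : ℕ := T - ((t : ℕ) + 1) with hk
    have hagree : ∀ y, DPR_E ℓ α γ P π t.succ y = DPR_E ℓ α γ P π0 t.succ y := by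
      intro y
      refine DPR_E_congr ℓ α γ P t.succ y fun r hr => ?_
      have hne : r ≠ t := by
        intro h
        subst h
        simp only [Fin.le_def, Fin.val_succ, Fin.coe_castSucc] at hr
        omega
      simp only [hπdef, if_neg hne]
    have hcast : ∀ y, DPR_E ℓ α γ P π t.succ y ≤ ↑(u t.succ y + (k : ℝ) * ε) := by
      intro y
      rw [hagree y]
      simpa only [hk, Fin.val_succ] using hb0 y
    have hsum : ∑ y, (↑(ρ x y) : EReal) *
        (↑(α t x y * P t) + DPR_E ℓ α γ P π t.succ y) ≤
        ↑(∑ y, ρ x y * (α t x y * P t + (u t.succ y + (k : ℝ) * ε))) := by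
      rw [DPR_coe_sum]
      refine Finset.sum_le_sum fun y _ => ?_
      rw [EReal.coe_mul (ρ x y)]
      refine DPR_mul_le_mul ((hρs x).1 y).1 ?_
      rw [EReal.coe_add]
      exact add_le_add_right (hcast y) _
    refine le_trans (add_le_add_right hsum _) ?_
    rw [← EReal.coe_add, ← EReal.coe_add, EReal.coe_le_coe_iff]
    have hsplit : ∑ y, ρ x y * (α t x y * P t + (u t.succ y + (k : ℝ) * ε)) =
        (∑ y, ρ x y * (α t x y * P t + u t.succ y)) + (k : ℝ) * ε := by
      have : ∀ y, ρ x y * (α t x y * P t + (u t.succ y + (k : ℝ) * ε)) =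
          ρ x y * (α t x y * P t + u t.succ y) + ρ x y * ((k : ℝ) * ε) := by
        intro y; ring
      rw [Finset.sum_congr rfl fun y _ => this y, Finset.sum_add_distrib,
        ← Finset.sum_mul, (hρs x).2, one_mul]
    have hTt : ((T - (t.castSucc : ℕ) : ℕ) : ℝ) = (k : ℝ) + 1 := by
      have ht := t.isLt
      have h1 : T - (t.castSucc : ℕ) = k + 1 := by
        simp only [Fin.coe_castSucc, hk]
        omega
      rw [h1]
      push_cast
      ring
    rw [hsplit, hTt]
    have h1 := hLe x
    linarith

end DPRmain

/-- dynamic programming representation: `U[γ,P](t,x)` equals the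
infimum over Markov policies `π ∈ Δ` of the expected cost of the controlled
Markov chain started from `x` at time `t`. -/
theorem dynamic_programming_representation {T n : ℕ} (hT : 1 ≤ T) (hn : 1 ≤ n)
    (ℓ : LSp T n) (α : ASp T n)
    (hconv : ∀ t x, EProper (ℓ t x) ∧ EConvexOn (ℓ t x) ∧
      LowerSemicontinuous (ℓ t x) ∧ ∀ ρ, ℓ t x ρ ≠ ⊤ → ρ ∈ simplex n)
    (γ : Msp T n) (P : Psp T) (u : Msp T n) (hdp : IsDP ℓ α γ P u) :
    ∀ (t : Fin T) (x : Fin n),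
      (↑(u t.castSucc x) : EReal) =
        ⨅ π ∈ {π : Wsp T n | InDelta π}, expCost ℓ α γ P π t x := by
  intro t x
  refine le_antisymm ?_ ?_
  · refine le_iInf fun π => le_iInf fun hπ => ?_
    rw [DPR_E_eq_expCost ℓ α γ P π t x]
    exact DPR_lower ℓ α γ P u hconv hdp t.castSucc π hπ x
  · by_contra hcon
    push_neg at hcon
    obtain ⟨r, hr1, hr2⟩ := EReal.exists_between_coe_real hcon
    have hδ : 0 < r - u t.castSucc x := by
      have := EReal.coe_lt_coe_iff.1 hr1
      linarith
    have hT0 : (0 : ℝ) < T := by exact_mod_cast Nat.lt_of_lt_of_le Nat.zero_lt_one hT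
    have hε : 0 < (r - u t.castSucc x) / T := div_pos hδ hT0
    obtain ⟨π, hπ, hb⟩ := DPR_upper hn ℓ α γ P u hconv hdp t.castSucc _ hε
    have hle : (⨅ π ∈ {π : Wsp T n | InDelta π}, expCost ℓ α γ P π t x) ≤
        expCost ℓ α γ P π t x := iInf₂_le π hπ
    rw [DPR_E_eq_expCost ℓ α γ P π t x] at hle
    have harith : u t.castSucc x +
        ((T - (t.castSucc : ℕ) : ℕ) : ℝ) * ((r - u t.castSucc x) / T) ≤ r := by
      have h1 : ((T - (t.castSucc : ℕ) : ℕ) : ℝ) ≤ (T : ℝ) := by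
        exact_mod_cast Nat.sub_le T _
      have h3 : ((T - (t.castSucc : ℕ) : ℕ) : ℝ) * ((r - u t.castSucc x) / T) ≤
          (T : ℝ) * ((r - u t.castSucc x) / T) :=
        mul_le_mul_of_nonneg_right h1 (le_of_lt hε)
      have h4 : (T : ℝ) * ((r - u t.castSucc x) / T) = r - u t.castSucc x := by
        field_simp
      linarith
    have hfin : (⨅ π ∈ {π : Wsp T n | InDelta π}, expCost ℓ α γ P π t x) < 
        ⨅ π ∈ {π : Wsp T n | InDelta π}, expCost ℓ α γ P π t x :=
      lt_of_le_of_lt (le_trans hle (le_trans (hb x) (by exact_mod_cast harith))) hr2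
    exact lt_irrefl _ hfin

end
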